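/- In the multi-unit model, for every pair of indices i < j (so q_i > q_j) there exists a positive integer constant R, depending only on the parameters (v, p, d), with R/(d_i·p_i) ∈ ℤ and R/(d_j·p_j) ∈ ℤ, such that for every capacity B ∈ ℕ and every vector x ∈ ℕ^k, one has Σ_n v_n·x_n + (R/(d_i·p_i))·v_i − V^d_B(x + (R/(d_i·p_i))·e_i) > Σ_n v_n·x_n + (R/(d_j·p_j))·v_j − V^d_B(x + (R/(d_j·p_j))·e_j); that is, adding R/(d_i·p_i) customers of type i to x yields strictly greater objective than adding R/(d_j·p_j) customers of type j. -/

import Mathlib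

open Finset

/-- PMF of a Binomial(m, p) random variable at value `s`. -/
noncomputable def binomPMF (p : ℝ) (m s : ℕ) : ℝ :=
  (m.choose s : ℝ) * p ^ s * (1 - p) ^ (m - s)

/-- Expectation of `g` applied to a vector of independent binomial random variables,
where coordinate `j` is Binomial(x j, p j). -/
noncomputable def jointExp {k : ℕ} (p : Fin k → ℝ) (x : Fin k → ℕ)
    (g : (Fin k → ℕ) → ℝ) : ℝ :=
  ∑ a ∈ Fintype.piFinset (fun j => Finset.range (x j + 1)),
    (∏ j, binomPMF (p j) (x j) (a j)) * g a

open Classical in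
/-- Probability of the event `E` for a vector of independent binomial random
variables, coordinate `j` being Binomial(x j, p j). -/
noncomputable def jointProb {k : ℕ} (p : Fin k → ℝ) (x : Fin k → ℕ)
    (E : (Fin k → ℕ) → Prop) : ℝ :=
  jointExp p x (fun a => if E a then 1 else 0)

/-- P[S(x) ≥ B], where S(x) = Σ_j X_{j, x_j} is Poisson binomial. -/
noncomputable def showTail {k : ℕ} (p : Fin k → ℝ) (x : Fin k → ℕ) (B : ℕ) : ℝ :=
  jointProb p x (fun a => B ≤ ∑ j, a j)

/-- Expected compensation V_B(x) = E[(S(x) − B)^+]. -/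
noncomputable def VB {k : ℕ} (p : Fin k → ℝ) (B : ℕ) (x : Fin k → ℕ) : ℝ :=
  jointExp p x (fun a => max ((∑ j, a j : ℝ) - B) 0)

/-- Objective of the offline problem with past accepted counts `y`:
f(x) = Σ_j v_j (y_j + x_j) − V_B(y + x). -/
noncomputable def objFn {k : ℕ} (v p : Fin k → ℝ) (B : ℕ) (y x : Fin k → ℕ) : ℝ :=
  ∑ j, v j * ((y j : ℝ) + (x j : ℝ)) - VB p B (fun j => y j + x j)

/-- Feasibility for the offline problem with demand bounds `n`. -/
def Feasible {k : ℕ} (n x : Fin k → ℕ) : Prop := ∀ j, x j ≤ n j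

/-- `x` is locally optimal at `j`: `x j` is the largest element of the argmax,
over `z ∈ {0,…,n j}`, of `z · v_j − V_B(y + x + (z − x_j)·e_j)`. -/
def LocallyOpt {k : ℕ} (v p : Fin k → ℝ) (B : ℕ) (n y : Fin k → ℕ)
    (x : Fin k → ℕ) (j : Fin k) : Prop :=
  ∀ z ≤ n j,
    ((z : ℝ) * v j - VB p B (fun i => y i + Function.update x j z i)
        ≤ (x j : ℝ) * v j - VB p B (fun i => y i + x i)) ∧
    (x j < z →
      (z : ℝ) * v j - VB p B (fun i => y i + Function.update x j z i)
        < (x j : ℝ) * v j - VB p B (fun i => y i + x i))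

/-- Multi-unit expected compensation `V^d_B(x) = E[(S_d(x) − B)^+]`, where
`S_d(x) = Σ_j d_j · X_{j,x_j}`. -/
noncomputable def VdB {k : ℕ} (p : Fin k → ℝ) (d : Fin k → ℕ) (B : ℕ)
    (x : Fin k → ℕ) : ℝ :=
  jointExp p x (fun a => max ((∑ j, (d j : ℝ) * (a j : ℝ)) - (B : ℝ)) 0)

/-- Multi-unit offline objective with past counts `y`:
`f_d(x) = Σ_j v_j (y_j + x_j) − V^d_B(y + x)`. -/
noncomputable def objFnD {k : ℕ} (v p : Fin k → ℝ) (d : Fin k → ℕ) (B : ℕ)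
    (y x : Fin k → ℕ) : ℝ :=
  ∑ j, v j * ((y j : ℝ) + (x j : ℝ)) - VdB p d B (fun j => y j + x j)

/-- `P[S_d(x) ≥ b]` for an integer threshold `b`. -/
noncomputable def showTailD {k : ℕ} (p : Fin k → ℝ) (d : Fin k → ℕ)
    (x : Fin k → ℕ) (b : ℤ) : ℝ :=
  jointProb p x (fun a => b ≤ ∑ j, (d j : ℤ) * (a j : ℤ))

/-- Multi-unit local optimality at `i`: `x i` is the largest element of the
argmax, over `z ∈ {0,…,n i}`, of `z · v_i − V^d_B(y + x + (z − x_i)·e_i)`. -/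
def LocallyOptD {k : ℕ} (v p : Fin k → ℝ) (d : Fin k → ℕ) (B : ℕ)
    (n y : Fin k → ℕ) (x : Fin k → ℕ) (i : Fin k) : Prop :=
  ∀ z ≤ n i,
    ((z : ℝ) * v i - VdB p d B (fun m => y m + Function.update x i z m)
        ≤ (x i : ℝ) * v i - VdB p d B (fun m => y m + x m)) ∧
    (x i < z →
      (z : ℝ) * v i - VdB p d B (fun m => y m + Function.update x i z m)
        < (x i : ℝ) * v i - VdB p d B (fun m => y m + x m))


/-! ### Auxiliary lemmas -/


lemma binomPMF_nonneg {p : ℝ} (h0 : 0 ≤ p) (h1 : p ≤ 1) (m s : ℕ) : 0 ≤ binomPMF p m s := by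
  unfold binomPMF
  have : (0:ℝ) ≤ 1 - p := by linarith
  positivity

lemma sum_binomPMF (p : ℝ) (m : ℕ) : ∑ s ∈ range (m+1), binomPMF p m s = 1 := by
  have h := add_pow p (1-p) m
  simp only [add_sub_cancel, one_pow] at h
  calc ∑ s ∈ range (m+1), binomPMF p m s
      = ∑ s ∈ range (m+1), p ^ s * (1-p) ^ (m-s) * (m.choose s : ℝ) := by
        apply Finset.sum_congr rfl; intro s _; unfold binomPMF; ring
    _ = 1 := h.symm

lemma binom_conv (p : ℝ) (m n : ℕ) (f : ℕ → ℝ) :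
    ∑ s ∈ range (m+n+1), binomPMF p (m+n) s * f s
      = ∑ a ∈ range (m+1), ∑ b ∈ range (n+1),
          binomPMF p m a * (binomPMF p n b * f (a+b)) := by
  have key : ∀ s ∈ range (m+n+1), binomPMF p (m+n) s * f s
      = ∑ ij ∈ Finset.HasAntidiagonal.antidiagonal s,
          ((m.choose ij.1 * n.choose ij.2 : ℕ) : ℝ) * p ^ (ij.1+ij.2)
            * (1-p) ^ (m+n-(ij.1+ij.2)) * f (ij.1+ij.2) := by
    intro s _
    have e1 : ∑ ij ∈ Finset.HasAntidiagonal.antidiagonal s,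
          ((m.choose ij.1 * n.choose ij.2 : ℕ) : ℝ) * p ^ (ij.1+ij.2)
            * (1-p) ^ (m+n-(ij.1+ij.2)) * f (ij.1+ij.2)
        = ∑ ij ∈ Finset.HasAntidiagonal.antidiagonal s,
          ((m.choose ij.1 * n.choose ij.2 : ℕ) : ℝ) * p ^ s * (1-p) ^ (m+n-s) * f s :=
      Finset.sum_congr rfl (fun ij hij => by
        rw [Finset.HasAntidiagonal.mem_antidiagonal] at hij; rw [hij])
    rw [e1, ← Finset.sum_mul, ← Finset.sum_mul, ← Finset.sum_mul, ← Nat.cast_sum,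
      ← Nat.add_choose_eq]
    unfold binomPMF; ring
  rw [Finset.sum_congr rfl key]
  rw [← Finset.sum_biUnion (by
    intro s _ t _ hst
    simp only [Finset.disjoint_left, Finset.HasAntidiagonal.mem_antidiagonal]
    intro x hx hx2
    exact hst (hx ▸ hx2))]
  rw [← Finset.sum_product' (f := fun a b => binomPMF p m a * (binomPMF p n b * f (a+b)))]
  have hsub : range (m+1) ×ˢ range (n+1) ⊆ (range (m+n+1)).biUnion Finset.HasAntidiagonal.antidiagonal := by
    intro x hx
    rw [Finset.mem_product, Finset.mem_range, Finset.mem_range] at hx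
    rw [Finset.mem_biUnion]
    exact ⟨x.1 + x.2, Finset.mem_range.2 (by omega), Finset.HasAntidiagonal.mem_antidiagonal.2 rfl⟩
  rw [← Finset.sum_subset hsub (fun x _ hnx => by
    rw [Finset.mem_product] at hnx
    simp only [Finset.mem_range, not_and_or, not_lt] at hnx
    have : m.choose x.1 * n.choose x.2 = 0 := by
      rcases hnx with h | h
      · rw [Nat.choose_eq_zero_of_lt (show m < x.1 by omega), zero_mul]
      · rw [Nat.choose_eq_zero_of_lt (show n < x.2 by omega), mul_zero]
    rw [this]
    simp)]
  apply Finset.sum_congr rfl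
  intro x hx
  rw [Finset.mem_product, Finset.mem_range, Finset.mem_range] at hx
  unfold binomPMF
  rw [pow_add, show m+n-(x.1+x.2) = (m-x.1)+(n-x.2) by omega, pow_add, Nat.cast_mul]
  ring

lemma binom_var (p : ℝ) (m : ℕ) :
    ∑ s ∈ range (m+1), binomPMF p m s * ((s:ℝ) - m*p)^2 = m*p*(1-p) := by
  induction m with
  | zero => simp [binomPMF]
  | succ m ih =>
    have h := binom_conv p m 1 (fun s => ((s:ℝ) - (m+1)*p)^2)
    push_cast at h ⊢
    rw [h]
    have e1 : ∀ a ∈ range (m+1),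
        ∑ b ∈ range (1+1), binomPMF p m a * (binomPMF p 1 b * (((a:ℝ)+(b:ℝ)) - (m+1)*p)^2)
        = binomPMF p m a * ((a:ℝ) - m*p)^2 + binomPMF p m a * (p*(1-p)) := by
      intro a _
      rw [Finset.sum_range_succ, Finset.sum_range_one]
      have h0 : binomPMF p 1 0 = 1 - p := by unfold binomPMF; norm_num
      have h1 : binomPMF p 1 1 = p := by unfold binomPMF; norm_num
      rw [h0, h1]
      push_cast
      ring
    calc ∑ a ∈ range (m+1), ∑ b ∈ range 2,
            binomPMF p m a * (binomPMF p 1 b * (((a:ℝ)+(b:ℝ)) - ((m:ℝ)+1)*p)^2)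
        = ∑ a ∈ range (m+1),
            (binomPMF p m a * ((a:ℝ) - m*p)^2 + binomPMF p m a * (p*(1-p))) := by
          apply Finset.sum_congr rfl
          intro a ha
          rw [← e1 a ha]
      _ = m*p*(1-p) + 1 * (p*(1-p)) := by
          rw [Finset.sum_add_distrib, ih, ← Finset.sum_mul, sum_binomPMF]
      _ = (m+1)*p*(1-p) := by ring

lemma jointExp_update {k : ℕ} (p : Fin k → ℝ) (y : Fin k → ℕ) (i : Fin k)
    (F : (Fin k → ℕ) → ℝ) :
    jointExp p y F = ∑ u ∈ range (y i + 1), binomPMF (p i) (y i) u *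
      jointExp p (Function.update y i 0) (fun a => F (Function.update a i u)) := by
  unfold jointExp
  simp only [Finset.mul_sum]
  rw [← Finset.sum_product'
    (f := fun u a => binomPMF (p i) (y i) u *
      ((∏ m, binomPMF (p m) (Function.update y i 0 m) (a m)) * F (Function.update a i u)))]
  apply Finset.sum_nbij' (i := fun b => (b i, Function.update b i 0))
    (j := fun z => Function.update z.2 i z.1)
  · intro b hb
    rw [Fintype.mem_piFinset] at hb
    rw [Finset.mem_product]
    constructor
    · exact hb i
    · rw [Fintype.mem_piFinset]
      intro m
      by_cases hm : m = i
      · subst hm; simp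
      · simp [Function.update_of_ne hm]
        have := hb m
        simpa [Function.update_of_ne hm] using this
  · intro z hz
    rw [Finset.mem_product, Fintype.mem_piFinset] at hz
    rw [Fintype.mem_piFinset]
    intro m
    by_cases hm : m = i
    · subst hm; simpa using hz.1
    · simpa [Function.update_of_ne hm] using hz.2 m
  · intro b hb
    simp [Function.update_idem, Function.update_eq_self]
  · intro z hz
    rw [Finset.mem_product, Fintype.mem_piFinset] at hz
    have hzi : z.2 i = 0 := by simpa using hz.2 i
    refine Prod.ext (by simp) ?_
    simp only [Function.update_idem]
    rw [← hzi, Function.update_eq_self]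
  · intro b hb
    rw [Fintype.mem_piFinset] at hb
    have key : (∏ m, binomPMF (p m) (y m) (b m))
        = binomPMF (p i) (y i) (b i) *
          ∏ m, binomPMF (p m) (Function.update y i 0 m) (Function.update b i 0 m) := by
      rw [← Finset.mul_prod_erase Finset.univ _ (Finset.mem_univ i),
          ← Finset.mul_prod_erase Finset.univ
            (fun m => binomPMF (p m) (Function.update y i 0 m) (Function.update b i 0 m))
            (Finset.mem_univ i)]
      simp only [Function.update_self]
      have h00 : binomPMF (p i) 0 0 = 1 := by unfold binomPMF; norm_num
      rw [h00, one_mul]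
      congr 1
      apply Finset.prod_congr rfl
      intro m hm
      have hmi : m ≠ i := (Finset.mem_erase.1 hm).1
      rw [Function.update_of_ne hmi, Function.update_of_ne hmi]
    rw [key]
    have hrw : Function.update (Function.update b i 0) i (b i) = b := by
      rw [Function.update_idem, Function.update_eq_self]
    rw [hrw]
    ring

lemma jointExp_congr {k : ℕ} (p : Fin k → ℝ) (x : Fin k → ℕ)
    {g h : (Fin k → ℕ) → ℝ}
    (H : ∀ a ∈ Fintype.piFinset (fun j => Finset.range (x j + 1)), g a = h a) :
    jointExp p x g = jointExp p x h := by
  unfold jointExp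
  exact Finset.sum_congr rfl (fun a ha => by rw [H a ha])

lemma jointExp_one {k : ℕ} (p : Fin k → ℝ) (x : Fin k → ℕ) :
    jointExp p x (fun _ => 1) = 1 := by
  unfold jointExp
  simp only [mul_one]
  rw [← Finset.prod_univ_sum]
  rw [Finset.prod_congr rfl (fun m _ => sum_binomPMF (p m) (x m))]
  simp

lemma jointExp_mono {k : ℕ} (p : Fin k → ℝ) (x : Fin k → ℕ)
    (hp : ∀ m, 0 ≤ p m ∧ p m ≤ 1) {g h : (Fin k → ℕ) → ℝ}
    (H : ∀ a ∈ Fintype.piFinset (fun j => Finset.range (x j + 1)), g a ≤ h a) :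
    jointExp p x g ≤ jointExp p x h := by
  unfold jointExp
  apply Finset.sum_le_sum
  intro a ha
  have : 0 ≤ ∏ j, binomPMF (p j) (x j) (a j) :=
    Finset.prod_nonneg (fun j _ => binomPMF_nonneg (hp j).1 (hp j).2 _ _)
  exact mul_le_mul_of_nonneg_left (H a ha) this

lemma jointExp_add_const {k : ℕ} (p : Fin k → ℝ) (x : Fin k → ℕ)
    (g : (Fin k → ℕ) → ℝ) (c : ℝ) :
    jointExp p x (fun a => g a + c) = jointExp p x g + c := by
  have h1 := jointExp_one p x
  unfold jointExp at h1 ⊢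
  simp only [mul_one] at h1
  have e : ∀ a ∈ Fintype.piFinset (fun j => Finset.range (x j + 1)),
      (∏ j, binomPMF (p j) (x j) (a j)) * (g a + c)
      = (∏ j, binomPMF (p j) (x j) (a j)) * g a
        + (∏ j, binomPMF (p j) (x j) (a j)) * c := fun a _ => by ring
  rw [Finset.sum_congr rfl e, Finset.sum_add_distrib, ← Finset.sum_mul, h1, one_mul]

lemma jointExp_split {k : ℕ} (p : Fin k → ℝ) (d : Fin k → ℕ) (x : Fin k → ℕ)
    (i : Fin k) (r : ℕ) (f : ℝ → ℝ) :
    jointExp p (fun m => x m + if m = i then r else 0)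
        (fun a => f (∑ m, (d m : ℝ) * (a m : ℝ)))
      = ∑ s ∈ range (r+1), binomPMF (p i) r s *
          jointExp p x (fun a => f ((∑ m, (d m : ℝ) * (a m : ℝ)) + (d i : ℝ) * (s : ℝ))) := by
  set x' : Fin k → ℕ := fun m => x m + if m = i then r else 0 with hx'
  have hx'i : x' i = x i + r := by simp [hx']
  have hupd : Function.update x' i 0 = Function.update x i 0 := by
    funext m
    by_cases hm : m = i
    · subst hm; simp
    · simp [Function.update_of_ne hm, hx', hm]
  have hsum : ∀ (a : Fin k → ℕ), a i = 0 → ∀ u : ℕ,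
      (∑ m, (d m : ℝ) * ((Function.update a i u m : ℕ) : ℝ))
        = (∑ m, (d m : ℝ) * (a m : ℝ)) + (d i : ℝ) * (u : ℝ) := by
    intro a hai u
    rw [← Finset.add_sum_erase _ (fun m => (d m:ℝ) * ((Function.update a i u m : ℕ):ℝ))
        (Finset.mem_univ i),
        ← Finset.add_sum_erase _ (fun m => (d m:ℝ) * (a m:ℝ)) (Finset.mem_univ i)]
    rw [Finset.sum_congr rfl (fun m hm => by
      rw [Function.update_of_ne (Finset.mem_erase.1 hm).1])]
    simp [hai]
    ring
  have hzero : ∀ a ∈ Fintype.piFinset (fun m => Finset.range (Function.update x i 0 m + 1)),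
      a i = 0 := by
    intro a ha
    have := Fintype.mem_piFinset.1 ha i
    simpa using this
  -- Step A
  rw [jointExp_update p x' i, hupd]
  -- Step B : rewrite inner jointExp
  have stepB : ∀ u : ℕ,
      jointExp p (Function.update x i 0)
        (fun a => f (∑ m, (d m : ℝ) * ((Function.update a i u m : ℕ) : ℝ)))
      = jointExp p (Function.update x i 0)
        (fun a => f ((∑ m, (d m : ℝ) * (a m : ℝ)) + (d i : ℝ) * (u : ℝ))) := by
    intro u
    apply jointExp_congr
    intro a ha
    rw [hsum a (hzero a ha) u]
  rw [Finset.sum_congr rfl (fun u _ => by rw [stepB u])]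
  -- Step C : 1-d convolution on coordinate i
  rw [hx'i]
  rw [binom_conv (p i) (x i) r (fun u => jointExp p (Function.update x i 0)
        (fun a => f ((∑ m, (d m : ℝ) * (a m : ℝ)) + (d i : ℝ) * (u : ℝ))))]
  -- Step D : swap sums and pull out factor
  rw [Finset.sum_comm]
  apply Finset.sum_congr rfl
  intro s _
  -- Step E
  rw [jointExp_update p x i
    (F := fun a => f ((∑ m, (d m : ℝ) * (a m : ℝ)) + (d i : ℝ) * (s : ℝ)))]
  rw [Finset.mul_sum]
  apply Finset.sum_congr rfl
  intro u _
  have e2 : jointExp p (Function.update x i 0)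
      (fun a => f ((∑ m, (d m : ℝ) * ((Function.update a i u m : ℕ) : ℝ)) + (d i : ℝ) * (s : ℝ)))
      = jointExp p (Function.update x i 0)
      (fun a => f ((∑ m, (d m : ℝ) * (a m : ℝ)) + (d i : ℝ) * ((u + s : ℕ) : ℝ))) := by
    apply jointExp_congr
    intro a ha
    rw [hsum a (hzero a ha) u]
    congr 1
    push_cast
    ring
  rw [e2]
  ring

noncomputable def PhiFn {k : ℕ} (p : Fin k → ℝ) (d : Fin k → ℕ) (B : ℕ)
    (x : Fin k → ℕ) (c : ℝ) : ℝ :=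
  jointExp p x (fun a => max ((∑ m, (d m : ℝ) * (a m : ℝ)) + c - (B : ℝ)) 0)

lemma VdB_eq_sum {k : ℕ} (p : Fin k → ℝ) (d : Fin k → ℕ) (B : ℕ) (x : Fin k → ℕ)
    (i : Fin k) (r : ℕ) :
    VdB p d B (fun m => x m + if m = i then r else 0)
      = ∑ s ∈ range (r+1), binomPMF (p i) r s * PhiFn p d B x ((d i : ℝ) * (s : ℝ)) := by
  have h := jointExp_split p d x i r (fun c => max (c - (B : ℝ)) 0)
  exact h

lemma PhiFn_le {k : ℕ} (p : Fin k → ℝ) (d : Fin k → ℕ) (B : ℕ) (x : Fin k → ℕ)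
    (hp : ∀ m, 0 ≤ p m ∧ p m ≤ 1) (c c' : ℝ) :
    PhiFn p d B x c ≤ PhiFn p d B x c' + |c - c'| := by
  unfold PhiFn
  rw [← jointExp_add_const]
  apply jointExp_mono p x hp
  intro a _
  have h1 := le_abs_self (c - c')
  have h2 := abs_nonneg (c - c')
  apply max_le
  · have : (∑ m, (d m:ℝ)*(a m:ℝ)) + c - B
        ≤ ((∑ m, (d m:ℝ)*(a m:ℝ)) + c' - B) + |c - c'| := by linarith
    exact this.trans (add_le_add (le_max_left _ _) le_rfl)
  · exact add_nonneg (le_max_right _ _) h2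

lemma abs_moment_bound (q : ℝ) (h0 : 0 ≤ q) (h1 : q ≤ 1) (dd r : ℕ) (c : ℝ)
    (hc : 0 < c) (RR : ℝ) (hRR : RR = (dd:ℝ) * r * q) :
    ∑ s ∈ range (r+1), binomPMF q r s * |(dd:ℝ)*s - RR|
      ≤ c/2 + (dd:ℝ)^2 * ((r:ℝ)*q*(1-q))/(2*c) := by
  calc ∑ s ∈ range (r+1), binomPMF q r s * |(dd:ℝ)*s - RR|
      ≤ ∑ s ∈ range (r+1),
          binomPMF q r s * (c/2 + (dd:ℝ)^2*(((s:ℝ) - r*q)^2)/(2*c)) := by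
        apply Finset.sum_le_sum
        intro s _
        apply mul_le_mul_of_nonneg_left _ (binomPMF_nonneg h0 h1 _ _)
        have h2 : ((dd:ℝ)*s - RR)^2 = (dd:ℝ)^2 * ((s:ℝ) - r*q)^2 := by rw [hRR]; ring
        have hsq : |(dd:ℝ)*s - RR|^2 = ((dd:ℝ)*s - RR)^2 := sq_abs _
        have h4 : 2*c*|(dd:ℝ)*s - RR| ≤ c^2 + (dd:ℝ)^2*(((s:ℝ) - r*q)^2) := by
          nlinarith [sq_nonneg (|(dd:ℝ)*s - RR| - c)]
        calc |(dd:ℝ)*s - RR| = (2*c*|(dd:ℝ)*s - RR|)/(2*c) := by field_simp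
          _ ≤ (c^2 + (dd:ℝ)^2*(((s:ℝ) - r*q)^2))/(2*c) :=
              (div_le_div_iff_of_pos_right (by positivity)).2 h4
          _ = c/2 + (dd:ℝ)^2*(((s:ℝ) - r*q)^2)/(2*c) := by field_simp
    _ = c/2 + (dd:ℝ)^2 * ((r:ℝ)*q*(1-q))/(2*c) := by
        have e : ∀ s ∈ range (r+1),
            binomPMF q r s * (c/2 + (dd:ℝ)^2*(((s:ℝ) - r*q)^2)/(2*c))
            = binomPMF q r s * (c/2)
              + ((dd:ℝ)^2/(2*c)) * (binomPMF q r s * ((s:ℝ) - r*q)^2) := fun s _ => by ring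
        rw [Finset.sum_congr rfl e, Finset.sum_add_distrib, ← Finset.sum_mul,
          sum_binomPMF, ← Finset.mul_sum, binom_var]
        ring

lemma sum_Phi_le {k : ℕ} (p : Fin k → ℝ) (d : Fin k → ℕ) (B : ℕ) (x : Fin k → ℕ)
    (hp : ∀ m, 0 ≤ p m ∧ p m ≤ 1) (i : Fin k) (r : ℕ) (RR : ℝ) :
    ∑ s ∈ range (r+1), binomPMF (p i) r s * PhiFn p d B x ((d i : ℝ) * (s:ℝ))
      ≤ PhiFn p d B x RR
        + ∑ s ∈ range (r+1), binomPMF (p i) r s * |(d i : ℝ)*(s:ℝ) - RR| := by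
  calc ∑ s ∈ range (r+1), binomPMF (p i) r s * PhiFn p d B x ((d i : ℝ) * (s:ℝ))
      ≤ ∑ s ∈ range (r+1), binomPMF (p i) r s
          * (PhiFn p d B x RR + |(d i : ℝ)*(s:ℝ) - RR|) := by
        apply Finset.sum_le_sum
        intro s _
        exact mul_le_mul_of_nonneg_left (PhiFn_le p d B x hp _ _)
          (binomPMF_nonneg (hp i).1 (hp i).2 _ _)
    _ = _ := by
        have e : ∀ s ∈ range (r+1), binomPMF (p i) r s
            * (PhiFn p d B x RR + |(d i : ℝ)*(s:ℝ) - RR|)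
            = binomPMF (p i) r s * PhiFn p d B x RR
              + binomPMF (p i) r s * |(d i : ℝ)*(s:ℝ) - RR| := fun s _ => by ring
        rw [Finset.sum_congr rfl e, Finset.sum_add_distrib, ← Finset.sum_mul,
          sum_binomPMF, one_mul]

lemma sum_Phi_ge {k : ℕ} (p : Fin k → ℝ) (d : Fin k → ℕ) (B : ℕ) (x : Fin k → ℕ)
    (hp : ∀ m, 0 ≤ p m ∧ p m ≤ 1) (i : Fin k) (r : ℕ) (RR : ℝ) :
    PhiFn p d B x RR
        - ∑ s ∈ range (r+1), binomPMF (p i) r s * |(d i : ℝ)*(s:ℝ) - RR|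
      ≤ ∑ s ∈ range (r+1), binomPMF (p i) r s * PhiFn p d B x ((d i : ℝ) * (s:ℝ)) := by
  have step : ∀ s ∈ range (r+1),
      binomPMF (p i) r s * PhiFn p d B x RR
        - binomPMF (p i) r s * |(d i : ℝ)*(s:ℝ) - RR|
      ≤ binomPMF (p i) r s * PhiFn p d B x ((d i : ℝ) * (s:ℝ)) := by
    intro s _
    have h := PhiFn_le p d B x hp RR ((d i : ℝ) * (s:ℝ))
    rw [abs_sub_comm] at h
    have hw := binomPMF_nonneg (hp i).1 (hp i).2 r s
    nlinarith [mul_le_mul_of_nonneg_left h hw]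
  calc PhiFn p d B x RR - ∑ s ∈ range (r+1), binomPMF (p i) r s * |(d i : ℝ)*(s:ℝ) - RR|
      = ∑ s ∈ range (r+1), (binomPMF (p i) r s * PhiFn p d B x RR
          - binomPMF (p i) r s * |(d i : ℝ)*(s:ℝ) - RR|) := by
        rw [Finset.sum_sub_distrib, ← Finset.sum_mul, sum_binomPMF, one_mul]
    _ ≤ _ := Finset.sum_le_sum step


/-- **Lemma 4 (Ext): exchange argument in the multi-unit model.**  For `i < j`
there is a positive integer `R` with `R/(d_i·p_i)` and `R/(d_j·p_j)` integers
(`ri`, `rj`) such that for every `B` and `x ∈ ℕ^k`, adding `ri` type-`i`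
customers beats adding `rj` type-`j` customers. -/
theorem exchange_argument_multi {k : ℕ} (v p : Fin k → ℝ) (d : Fin k → ℕ)
    (hk : 1 ≤ k)
    (hp : ∀ j, 0 < p j ∧ p j < 1)
    (hrat : ∀ j, ∃ q : ℚ, p j = (q : ℝ))
    (hd : ∀ j, 0 < d j)
    (hv : ∀ j, 0 < v j)
    (hq1 : ∀ j, v j < (d j : ℝ) * p j)
    (hord : ∀ i j : Fin k, i < j →
      v j / ((d j : ℝ) * p j) < v i / ((d i : ℝ) * p i))
    (i j : Fin k) (hij : i < j) :
    ∃ R ri rj : ℕ, 0 < R ∧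
      (ri : ℝ) * ((d i : ℝ) * p i) = (R : ℝ) ∧
      (rj : ℝ) * ((d j : ℝ) * p j) = (R : ℝ) ∧
      ∀ (B : ℕ) (x : Fin k → ℕ),
        (∑ m, v m * (x m : ℝ)) + (rj : ℝ) * v j
            - VdB p d B (fun m => x m + if m = j then rj else 0)
          < (∑ m, v m * (x m : ℝ)) + (ri : ℝ) * v i
            - VdB p d B (fun m => x m + if m = i then ri else 0) := by
  have hp' : ∀ m, 0 ≤ p m ∧ p m ≤ 1 := fun m => ⟨(hp m).1.le, (hp m).2.le⟩
  obtain ⟨qi, hqi⟩ := hrat i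
  obtain ⟨qj, hqj⟩ := hrat j
  have hqi_pos : 0 < qi := by
    have := (hp i).1; rw [hqi] at this; exact_mod_cast this
  have hqj_pos : 0 < qj := by
    have := (hp j).1; rw [hqj] at this; exact_mod_cast this
  set Ni := qi.num.toNat with hNi_def
  set Nj := qj.num.toNat with hNj_def
  have hNi : (Ni : ℤ) = qi.num := Int.toNat_of_nonneg (Rat.num_pos.2 hqi_pos).le
  have hNj : (Nj : ℤ) = qj.num := Int.toNat_of_nonneg (Rat.num_pos.2 hqj_pos).le
  have hNi_pos : 0 < Ni := by
    have := Rat.num_pos.2 hqi_pos; omega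
  have hNj_pos : 0 < Nj := by
    have := Rat.num_pos.2 hqj_pos; omega
  have hpi : p i * (qi.den : ℝ) = (Ni : ℝ) := by
    rw [hqi, Rat.cast_def, div_mul_cancel₀ _ (by exact_mod_cast qi.den_nz : ((qi.den:ℝ)) ≠ 0)]
    exact_mod_cast congrArg (fun z : ℤ => (z : ℝ)) hNi.symm
  have hpj : p j * (qj.den : ℝ) = (Nj : ℝ) := by
    rw [hqj, Rat.cast_def, div_mul_cancel₀ _ (by exact_mod_cast qj.den_nz : ((qj.den:ℝ)) ≠ 0)]
    exact_mod_cast congrArg (fun z : ℤ => (z : ℝ)) hNj.symm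
  -- epsilon
  set ε : ℝ := v i / ((d i : ℝ) * p i) - v j / ((d j : ℝ) * p j) with hε_def
  have hε : 0 < ε := sub_pos.2 (hord i j hij)
  clear_value ε
  -- choose multiplier t
  obtain ⟨t0, ht0⟩ := exists_nat_gt (8*((d i:ℝ)+(d j:ℝ))/(3*ε^2))
  set t : ℕ := t0 + 1 with ht_def
  have ht_big : 8*((d i:ℝ)+(d j:ℝ))/(3*ε^2) < (t:ℝ) := by
    rw [ht_def]; push_cast; linarith
  set R : ℕ := t * (d i * d j * Ni * Nj) with hR_def
  set ri : ℕ := t * (d j * Nj * qi.den) with hri_def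
  set rj : ℕ := t * (d i * Ni * qj.den) with hrj_def
  have hR_pos : 0 < R := by
    have := hd i; have := hd j
    positivity
  have hRt : (t:ℝ) ≤ (R:ℝ) := by
    have h1 : t ≤ R := Nat.le_mul_of_pos_right t
      (by have := hd i; have := hd j; positivity)
    exact_mod_cast h1
  clear_value t R ri rj
  have hriR : (ri : ℝ) * ((d i : ℝ) * p i) = (R : ℝ) := by
    rw [hri_def, hR_def]
    push_cast
    linear_combination ((t:ℝ) * (d j:ℝ) * (Nj:ℝ) * (d i:ℝ)) * hpi
  have hrjR : (rj : ℝ) * ((d j : ℝ) * p j) = (R : ℝ) := by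
    rw [hrj_def, hR_def]
    push_cast
    linear_combination ((t:ℝ) * (d i:ℝ) * (Ni:ℝ) * (d j:ℝ)) * hpj
  refine ⟨R, ri, rj, hR_pos, hriR, hrjR, ?_⟩
  intro B x
  have hdpi : 0 < (d i:ℝ) * p i := by
    have := hd i; have := (hp i).1; positivity
  have hdpj : 0 < (d j:ℝ) * p j := by
    have := hd j; have := (hp j).1; positivity
  -- revenue identities
  have hvi : (ri:ℝ) * v i = (v i / ((d i:ℝ)*p i)) * (R:ℝ) := by
    rw [← hriR, div_mul_eq_mul_div, mul_div_assoc, mul_div_cancel_right₀ _ hdpi.ne', mul_comm]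
  have hvj : (rj:ℝ) * v j = (v j / ((d j:ℝ)*p j)) * (R:ℝ) := by
    rw [← hrjR, div_mul_eq_mul_div, mul_div_assoc, mul_div_cancel_right₀ _ hdpj.ne', mul_comm]
  set cc : ℝ := ε * (R:ℝ) / 4 with hcc_def
  have hRpos' : (0:ℝ) < (R:ℝ) := by exact_mod_cast hR_pos
  have hcc : 0 < cc := by positivity
  clear_value cc
  -- mean identities for abs_moment_bound
  have hmean_i : (R:ℝ) = (d i:ℝ) * (ri:ℝ) * p i := by rw [← hriR]; ring
  have hmean_j : (R:ℝ) = (d j:ℝ) * (rj:ℝ) * p j := by rw [← hrjR]; ring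
  have hDi := abs_moment_bound (p i) (hp' i).1 (hp' i).2 (d i) ri cc hcc (R:ℝ) hmean_i
  have hDj := abs_moment_bound (p j) (hp' j).1 (hp' j).2 (d j) rj cc hcc (R:ℝ) hmean_j
  have hVi := VdB_eq_sum p d B x i ri
  have hVj := VdB_eq_sum p d B x j rj
  have hUi := sum_Phi_le p d B x hp' i ri (R:ℝ)
  have hLj := sum_Phi_ge p d B x hp' j rj (R:ℝ)
  -- variance bounds: d^2 * r * p * (1-p) <= d * R
  have hvar_i : (d i:ℝ)^2 * ((ri:ℝ) * p i * (1 - p i)) ≤ (d i:ℝ) * (R:ℝ) := by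
    have e : (d i:ℝ)^2*((ri:ℝ)*p i*(1-p i)) = (d i:ℝ)*(R:ℝ)*(1-p i) := by
      rw [← hriR]; ring
    rw [e]
    have h0 : 0 ≤ (d i:ℝ)*(R:ℝ)*(p i) := by
      have := (hp i).1.le
      positivity
    calc (d i:ℝ)*(R:ℝ)*(1-p i) = (d i:ℝ)*(R:ℝ) - (d i:ℝ)*(R:ℝ)*(p i) := by ring
      _ ≤ (d i:ℝ)*(R:ℝ) := by linarith
  have hvar_j : (d j:ℝ)^2 * ((rj:ℝ) * p j * (1 - p j)) ≤ (d j:ℝ) * (R:ℝ) := by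
    have e : (d j:ℝ)^2*((rj:ℝ)*p j*(1-p j)) = (d j:ℝ)*(R:ℝ)*(1-p j) := by
      rw [← hrjR]; ring
    rw [e]
    have h0 : 0 ≤ (d j:ℝ)*(R:ℝ)*(p j) := by
      have := (hp j).1.le
      positivity
    calc (d j:ℝ)*(R:ℝ)*(1-p j) = (d j:ℝ)*(R:ℝ) - (d j:ℝ)*(R:ℝ)*(p j) := by ring
      _ ≤ (d j:ℝ)*(R:ℝ) := by linarith
  have hDi' : ∑ s ∈ range (ri+1), binomPMF (p i) ri s * |(d i : ℝ)*(s:ℝ) - (R:ℝ)|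
      ≤ cc/2 + (d i:ℝ)*(R:ℝ)/(2*cc) := by
    refine hDi.trans ?_
    gcongr
  have hDj' : ∑ s ∈ range (rj+1), binomPMF (p j) rj s * |(d j : ℝ)*(s:ℝ) - (R:ℝ)|
      ≤ cc/2 + (d j:ℝ)*(R:ℝ)/(2*cc) := by
    refine hDj.trans ?_
    gcongr
  -- numeric bound
  have h8 : 8*((d i:ℝ)+(d j:ℝ)) < 3*ε^2*(R:ℝ) := by
    have h1 : 8*((d i:ℝ)+(d j:ℝ))/(3*ε^2) < (R:ℝ) := lt_of_lt_of_le ht_big hRt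
    calc 8*((d i:ℝ)+(d j:ℝ)) = (8*((d i:ℝ)+(d j:ℝ))/(3*ε^2))*(3*ε^2) := by field_simp
      _ < (R:ℝ)*(3*ε^2) := mul_lt_mul_of_pos_right h1 (by positivity)
      _ = 3*ε^2*(R:ℝ) := by ring
  have hE : (d i:ℝ)*(R:ℝ)/(2*cc) + (d j:ℝ)*(R:ℝ)/(2*cc) = 2*((d i:ℝ)+(d j:ℝ))/ε := by
    rw [hcc_def]
    field_simp
    ring
  have key : 2*((d i:ℝ)+(d j:ℝ))/ε < 3*ε*(R:ℝ)/4 := by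
    rw [div_lt_iff₀ hε]
    have e2 : 3*ε*(R:ℝ)/4*ε = 3*ε^2*(R:ℝ)/4 := by ring
    rw [e2]
    linarith
  have hnum : cc + ((d i:ℝ)*(R:ℝ)/(2*cc) + (d j:ℝ)*(R:ℝ)/(2*cc)) < ε*(R:ℝ) := by
    rw [hE, hcc_def]
    linarith [key]
  have hεR : (ri:ℝ)*v i - (rj:ℝ)*v j = ε*(R:ℝ) := by
    rw [hvi, hvj, hε_def]
    ring
  linarith [hVi ▸ hUi, hVj ▸ hLj, hDi', hDj', hnum, hεR]
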